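/- Under (A1)-(A3) and k_max>r, let C:[0,∞)→[0,∞) be integrable, let LR_target>0, and suppose there exists T*>0 with (1/ln 10)·∫₀^{T*}[k(C(t))−r]dt = LR_target. Then ∫₀^∞ C(t)dt ≥ ln(10)·LR_target·c_opt/(k(c_opt)−r), where c_opt is the global maximizer of (k(c)−r)/c. -/
import Mathlib


open MeasureTheory

/-- Lower bound on the AUC: under (A1)-(A3) and `k_max > r > 0`, any nonnegative
integrable concentration profile `C` achieving the log-reduction `LR_target` at
some time `T* > 0` satisfies
`∫₀^∞ C ≥ ln(10)·LR_target·c_opt/(k(c_opt) − r)`. -/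
theorem stmt_5 (k k' k'' : ℝ → ℝ) (kmax r copt LRtarget : ℝ)
    (hk0 : k 0 = 0)
    (hcont : ContinuousOn k (Set.Ici 0))
    (hmono : StrictMonoOn k (Set.Ici 0))
    (hd1 : ∀ c > (0:ℝ), HasDerivAt k (k' c) c)
    (hd2 : ∀ c > (0:ℝ), HasDerivAt k' (k'' c) c)
    (hlim : Filter.Tendsto k Filter.atTop (nhds kmax))
    (hA3 : (∀ c > (0:ℝ), k'' c < 0) ∨
      (∃ cinfl > (0:ℝ), (∀ c : ℝ, 0 < c → c < cinfl → 0 < k'' c) ∧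
        (∀ c : ℝ, cinfl < c → k'' c < 0)))
    (hr : 0 < r) (hkr : r < kmax)
    (hcopt : 0 < copt)
    (hmax : ∀ x : ℝ, 0 < x → (k x - r) / x ≤ (k copt - r) / copt)
    (hLR : 0 < LRtarget)
    (C : ℝ → ℝ)
    (hCpos : ∀ t, 0 ≤ C t)
    (hCint : IntegrableOn C (Set.Ioi 0))
    (hkCint : ∀ T > (0:ℝ), IntegrableOn (fun t => k (C t) - r) (Set.Ioc 0 T))
    (Tstar : ℝ) (hTstar : 0 < Tstar)
    (herad : (1 / Real.log 10) * ∫ t in Set.Ioc 0 Tstar, (k (C t) - r) = LRtarget) :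
    Real.log 10 * LRtarget * copt / (k copt - r) ≤ ∫ t in Set.Ioi 0, C t := by

  have hln : (0:ℝ) < Real.log 10 := Real.log_pos (by norm_num)
  set slope := (k copt - r) / copt with hslope_def
  -- slope is positive
  have hslope : 0 < slope := by
    have hev : ∀ᶠ x in Filter.atTop, r < k x := hlim.eventually (eventually_gt_nhds hkr)
    obtain ⟨x, hx1, hx2⟩ := (hev.and (Filter.eventually_gt_atTop 0)).exists
    have : (0:ℝ) < (k x - r) / x := div_pos (by linarith) hx2
    exact lt_of_lt_of_le this (hmax x hx2)
  have hkcopt : 0 < k copt - r := by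
    have := (div_pos_iff.mp hslope)
    rcases this with ⟨h1, _⟩ | ⟨_, h2⟩
    · exact h1
    · linarith
  -- pointwise bound: k (C t) - r ≤ slope * C t
  have hpt : ∀ t, k (C t) - r ≤ slope * C t := by
    intro t
    rcases lt_or_eq_of_le (hCpos t) with h | h
    · have := hmax (C t) h
      calc k (C t) - r = ((k (C t) - r) / C t) * C t := by field_simp
        _ ≤ slope * C t := by
            apply mul_le_mul_of_nonneg_right _ (le_of_lt h)
            exact this
    · rw [← h, hk0]; simp; linarith
  have hI : (∫ t in Set.Ioc 0 Tstar, (k (C t) - r)) = Real.log 10 * LRtarget := by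
    field_simp at herad
    linarith [herad]
  have hCintT : IntegrableOn C (Set.Ioc 0 Tstar) :=
    hCint.mono_set Set.Ioc_subset_Ioi_self
  have hstep1 : (∫ t in Set.Ioc 0 Tstar, (k (C t) - r))
      ≤ slope * ∫ t in Set.Ioc 0 Tstar, C t := by
    rw [← integral_const_mul]
    apply setIntegral_mono_on (hkCint Tstar hTstar) (hCintT.const_mul slope)
      measurableSet_Ioc
    intro t _
    exact hpt t
  have hstep2 : (∫ t in Set.Ioc 0 Tstar, C t) ≤ ∫ t in Set.Ioi 0, C t := by
    apply setIntegral_mono_set hCint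
    · exact Filter.Eventually.of_forall fun t => hCpos t
    · exact Filter.Eventually.of_forall (Set.Ioc_subset_Ioi_self)
  have hfinal : Real.log 10 * LRtarget ≤ slope * ∫ t in Set.Ioi 0, C t := by
    calc Real.log 10 * LRtarget = _ := hI.symm
      _ ≤ slope * ∫ t in Set.Ioc 0 Tstar, C t := hstep1
      _ ≤ slope * ∫ t in Set.Ioi 0, C t := by
          exact mul_le_mul_of_nonneg_left hstep2 (le_of_lt hslope)
  have hsc : slope * copt = k copt - r := div_mul_cancel₀ _ (ne_of_gt hcopt)
  rw [div_le_iff₀ hkcopt]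
  have h1 := mul_le_mul_of_nonneg_right hfinal hcopt.le
  have h2 : slope * (∫ t in Set.Ioi 0, C t) * copt
      = (∫ t in Set.Ioi 0, C t) * (k copt - r) := by
    rw [mul_right_comm, hsc, mul_comm]
  linarith
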